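/- There exist continuous real-valued potentials q1 and q2 on [0,1] with q1 ≠ q2 (they differ at some point) such that φ(1,ν;q1) = φ(1,ν;q2) for every ν ∈ ℝ; in particular, the data consisting of the boundary value of φ at x = 1 for all spectral parameters (equivalently, the flux measurement at x = 0 in the heat problem) does not determine the potential uniquely. -/

import Mathlib

/-- `IsSLSolution q nu f f'` : `f` solves `-f'' + q f = nu * f` on `[0,1]`
with `f 0 = 0`, `f' 0 = 1`, where `f'` is the derivative of `f` on `[0,1]`. -/
def IsSLSolution (q : ℝ → ℝ) (ν : ℝ) (φ φ' : ℝ → ℝ) : Prop :=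
  (∀ x ∈ Set.Icc (0:ℝ) 1, HasDerivAt φ (φ' x) x) ∧
  (∀ x ∈ Set.Icc (0:ℝ) 1, HasDerivAt φ' (q x * φ x - ν * φ x) x) ∧
  φ 0 = 0 ∧ φ' 0 = 1

/-- Key lemma: reflecting the potential does not change `φ 1`, by a Wronskian
argument with `u x = φ2 (1 - x)`. -/
lemma sl_reflect_same_value (q : ℝ → ℝ) (ν : ℝ) (φ1 φ1' φ2 φ2' : ℝ → ℝ)
    (h1 : IsSLSolution q ν φ1 φ1')
    (h2 : IsSLSolution (fun x => q (1 - x)) ν φ2 φ2') :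
    φ1 1 = φ2 1 := by
  obtain ⟨h1d, h1dd, h10, h1'0⟩ := h1
  obtain ⟨h2d, h2dd, h20, h2'0⟩ := h2
  set W : ℝ → ℝ := fun x => φ1 x * (-(φ2' (1 - x))) - φ1' x * φ2 (1 - x) with hWdef
  have hW : ∀ x ∈ Set.Icc (0:ℝ) 1, HasDerivAt W 0 x := by
    intro x hx
    obtain ⟨hx0, hx1⟩ := hx
    have hx' : (1 - x) ∈ Set.Icc (0:ℝ) 1 := ⟨by linarith, by linarith⟩
    have hinner : HasDerivAt (fun y : ℝ => 1 - y) (-1) x := by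
      exact (hasDerivAt_id x).const_sub (1:ℝ)
    have hu : HasDerivAt (fun y => φ2 (1 - y)) (φ2' (1 - x) * (-1)) x :=
      (h2d _ hx').comp x hinner
    have hu' : HasDerivAt (fun y => -(φ2' (1 - y)))
        (-(((fun z => q (1 - z)) (1 - x) * φ2 (1 - x) - ν * φ2 (1 - x)) * (-1))) x :=
      ((h2dd _ hx').comp x hinner).neg
    have hx'' : (1 : ℝ) - (1 - x) = x := by ring
    simp only [hx''] at hu'
    have hval :
        HasDerivAt W
          ((φ1' x * (-(φ2' (1 - x))) + φ1 x * (-((q x * φ2 (1 - x) - ν * φ2 (1 - x)) * (-1))))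
            - ((q x * φ1 x - ν * φ1 x) * φ2 (1 - x) + φ1' x * (φ2' (1 - x) * (-1)))) x :=
      ((h1d x ⟨hx0, hx1⟩).mul hu').sub ((h1dd x ⟨hx0, hx1⟩).mul hu)
    convert hval using 1
    ring
  have hcont : ContinuousOn W (Set.Icc 0 1) := fun x hx =>
    ((hW x hx).continuousAt).continuousWithinAt
  have hconst : ∀ x ∈ Set.Icc (0:ℝ) 1, W x = W 0 := by
    apply constant_of_has_deriv_right_zero hcont
    intro x hx
    exact ((hW x (Set.mem_Icc_of_Ico hx)).hasDerivWithinAt)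
  have h := hconst 1 ⟨by norm_num, le_refl 1⟩
  simp only [hWdef] at h
  norm_num [h10, h1'0, h20, h2'0] at h
  linarith
/-- there are two continuous potentials on `[0,1]`, differing at some
point, whose solutions `φ(·,ν;q)` (with `φ(0)=0`, `φ'(0)=1`) have the same value at
`x = 1` for every spectral parameter `ν ∈ ℝ`. -/
theorem phi_at_one_does_not_determine_potential :
    ∃ q1 q2 : ℝ → ℝ,
      ContinuousOn q1 (Set.Icc 0 1) ∧ ContinuousOn q2 (Set.Icc 0 1) ∧
      (∃ x ∈ Set.Icc (0:ℝ) 1, q1 x ≠ q2 x) ∧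
      ∀ ν : ℝ, ∀ φ1 φ1' φ2 φ2' : ℝ → ℝ,
        IsSLSolution q1 ν φ1 φ1' → IsSLSolution q2 ν φ2 φ2' → φ1 1 = φ2 1 := by
  refine ⟨fun x => x, fun x => 1 - x, continuous_id.continuousOn,
    (continuous_const.sub continuous_id).continuousOn,
    ⟨0, ⟨le_refl 0, by norm_num⟩, by norm_num⟩, ?_⟩
  intro ν φ1 φ1' φ2 φ2' h1 h2
  exact sl_reflect_same_value (fun x => x) ν φ1 φ1' φ2 φ2' h1 h2
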